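/- For the graph G_n whose adjacency matrix A is the block matrix [[0, J_{2×n}, 0], [J_{n×2}, 0, I_n], [0, I_n, 0]], the sum over all spectral idempotents E_r of |(E_r)_{u,v}| (u, v the two vertices of the first block) equals 2n/(2n+1); in particular this quantity tends to 1 as n → ∞. -/

import Mathlib

set_option maxHeartbeats 1600000 in
open Matrix in
theorem stmt_14 (n : ℕ) (hn : 1 ≤ n)
    (A : Matrix (Fin (2 * n + 2)) (Fin (2 * n + 2)) ℝ)
    (hA : ∀ i j : Fin (2 * n + 2), A i j =
      if ((i : ℕ) < 2 ∧ 2 ≤ (j : ℕ) ∧ (j : ℕ) < n + 2) ∨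
         ((j : ℕ) < 2 ∧ 2 ≤ (i : ℕ) ∧ (i : ℕ) < n + 2) ∨
         (2 ≤ (i : ℕ) ∧ (i : ℕ) < n + 2 ∧ (j : ℕ) = (i : ℕ) + n) ∨
         (2 ≤ (j : ℕ) ∧ (j : ℕ) < n + 2 ∧ (i : ℕ) = (j : ℕ) + n)
      then 1 else 0)
    (E : Fin 5 → Matrix (Fin (2 * n + 2)) (Fin (2 * n + 2)) ℝ)
    (hsym : ∀ r, (E r)ᵀ = E r)
    (horth : ∀ r s, E r * E s = if r = s then E r else 0)
    (hsum : ∑ r, E r = 1)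
    (hdec : A = ∑ r,
      (![Real.sqrt (2 * n + 1), -Real.sqrt (2 * n + 1), 1, -1, 0] r) • E r) :
    ∑ r, |E r 0 1| = 2 * n / (2 * n + 1) ∧
    Filter.Tendsto (fun m : ℕ => (2 * m : ℝ) / (2 * m + 1))
      Filter.atTop (nhds 1) := by
  have h0v : ((0 : Fin (2 * n + 2)) : ℕ) = 0 := rfl
  have h1v : ((1 : Fin (2 * n + 2)) : ℕ) = 1 := by simp [Fin.val_one']
  have hA0j : ∀ j : Fin (2*n+2), A 0 j = if 2 ≤ (j:ℕ) ∧ (j:ℕ) < n + 2 then 1 else 0 := by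
    intro j; rw [hA, h0v]; have := j.isLt
    split_ifs with h h' <;> first | rfl | (exfalso; omega)
  have hAj1 : ∀ j : Fin (2*n+2), A j 1 = if 2 ≤ (j:ℕ) ∧ (j:ℕ) < n + 2 then 1 else 0 := by
    intro j; rw [hA, h1v]; have := j.isLt
    split_ifs with h h' <;> first | rfl | (exfalso; omega)
  have hAmid : ∀ j m : Fin (2*n+2), 2 ≤ (j:ℕ) → (j:ℕ) < n+2 →
      A j m = if (m:ℕ) < 2 ∨ (m:ℕ) = (j:ℕ) + n then 1 else 0 := by
    intro j m hj1 hj2; rw [hA]; have := m.isLt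
    split_ifs with h h' <;> first | rfl | (exfalso; omega)
  have hcnt : ∑ j : Fin (2*n+2), (if 2 ≤ (j:ℕ) ∧ (j:ℕ) < n + 2 then (1:ℝ) else 0) = n := by
    rw [Fin.sum_univ_eq_sum_range (fun j => if 2 ≤ j ∧ j < n+2 then (1:ℝ) else 0),
      Finset.sum_boole]
    have : (Finset.range (2*n+2)).filter (fun j => 2 ≤ j ∧ j < n+2) = Finset.Ico 2 (n+2) := by
      ext a
      simp only [Finset.mem_filter, Finset.mem_range, Finset.mem_Ico]
      omega
    rw [this]; simp [Nat.card_Ico]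
  have hone : ∀ c : ℕ, c < 2*n+2 → ∑ j : Fin (2*n+2), (if (j:ℕ) = c then (1:ℝ) else 0) = 1 := by
    intro c hc
    rw [Fin.sum_univ_eq_sum_range (fun j => if j = c then (1:ℝ) else 0), Finset.sum_boole]
    have : (Finset.range (2*n+2)).filter (fun j => j = c) = {c} := by
      ext a
      simp only [Finset.mem_filter, Finset.mem_range, Finset.mem_singleton]
      omega
    rw [this]; simp
  -- row sum lemma
  have hS : ∀ m : Fin (2*n+2),
      ∑ j : Fin (2*n+2), (if 2 ≤ (j:ℕ) ∧ (j:ℕ) < n + 2 then (1:ℝ) else 0) * A j m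
      = if (m:ℕ) < 2 then (n:ℝ) else if (m:ℕ) < n+2 then 0 else 1 := by
    intro m
    have hm := m.isLt
    have step : ∀ j : Fin (2*n+2),
        (if 2 ≤ (j:ℕ) ∧ (j:ℕ) < n + 2 then (1:ℝ) else 0) * A j m
        = if (2 ≤ (j:ℕ) ∧ (j:ℕ) < n + 2) ∧ ((m:ℕ) < 2 ∨ (m:ℕ) = (j:ℕ) + n) then 1 else 0 := by
      intro j
      by_cases hj : 2 ≤ (j:ℕ) ∧ (j:ℕ) < n + 2
      · rw [if_pos hj, hAmid j m hj.1 hj.2, one_mul]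
        by_cases hm2 : (m:ℕ) < 2 ∨ (m:ℕ) = (j:ℕ) + n
        · rw [if_pos hm2, if_pos ⟨hj, hm2⟩]
        · rw [if_neg hm2, if_neg (by tauto)]
      · rw [if_neg hj, zero_mul, if_neg (by tauto)]
    rw [Finset.sum_congr rfl (fun j _ => step j)]
    by_cases h1 : (m:ℕ) < 2
    · rw [if_pos h1]
      refine Eq.trans ?_ hcnt
      refine Finset.sum_congr rfl fun j _ => ?_
      have := j.isLt
      split_ifs <;> first | rfl | (exfalso; omega)
    · rw [if_neg h1]
      by_cases h2 : (m:ℕ) < n + 2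
      · rw [if_pos h2]
        apply Finset.sum_eq_zero
        intro j _
        rw [if_neg (by omega)]
      · rw [if_neg h2]
        refine Eq.trans ?_ (hone ((m:ℕ) - n) (by omega))
        refine Finset.sum_congr rfl fun j _ => ?_
        have := j.isLt
        split_ifs <;> first | rfl | (exfalso; omega)
  -- symmetry of A
  have hAsymm : ∀ i j, A i j = A j i := by
    intro i j; rw [hA, hA]
    have h : (((i : ℕ) < 2 ∧ 2 ≤ (j : ℕ) ∧ (j : ℕ) < n + 2) ∨
         ((j : ℕ) < 2 ∧ 2 ≤ (i : ℕ) ∧ (i : ℕ) < n + 2) ∨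
         (2 ≤ (i : ℕ) ∧ (i : ℕ) < n + 2 ∧ (j : ℕ) = (i : ℕ) + n) ∨
         (2 ≤ (j : ℕ) ∧ (j : ℕ) < n + 2 ∧ (i : ℕ) = (j : ℕ) + n)) ↔
        (((j : ℕ) < 2 ∧ 2 ≤ (i : ℕ) ∧ (i : ℕ) < n + 2) ∨
         ((i : ℕ) < 2 ∧ 2 ≤ (j : ℕ) ∧ (j : ℕ) < n + 2) ∨
         (2 ≤ (j : ℕ) ∧ (j : ℕ) < n + 2 ∧ (i : ℕ) = (j : ℕ) + n) ∨
         (2 ≤ (i : ℕ) ∧ (i : ℕ) < n + 2 ∧ (j : ℕ) = (i : ℕ) + n)) := by tauto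
    rw [if_congr h rfl rfl]
  -- A^2 row from 0
  have hA2row : ∀ m : Fin (2*n+2), (A*A) 0 m
      = if (m:ℕ) < 2 then (n:ℝ) else if (m:ℕ) < n+2 then 0 else 1 := by
    intro m
    rw [Matrix.mul_apply, ← hS m]
    exact Finset.sum_congr rfl fun j _ => by rw [hA0j]
  have hA2col : ∀ m : Fin (2*n+2), (A*A) m 1
      = if (m:ℕ) < 2 then (n:ℝ) else if (m:ℕ) < n+2 then 0 else 1 := by
    intro m
    rw [Matrix.mul_apply, ← hS m]
    exact Finset.sum_congr rfl fun j _ => by rw [hAj1, hAsymm j m, mul_comm]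
  have hA1e : A 0 1 = 0 := by
    rw [hA0j 1, h1v]
    rw [if_neg (by omega)]
  have hA2e : (A*A) 0 1 = (n:ℝ) := by
    rw [hA2row 1, h1v]; norm_num
  have hA3e : (A*A*A) 0 1 = 0 := by
    rw [Matrix.mul_apply]
    apply Finset.sum_eq_zero
    intro j _
    rw [hA2row j, hAj1 j]
    have := j.isLt
    split_ifs <;> first | ring1 | (exfalso; omega)
  have hA4e : ((A*A)*(A*A)) 0 1 = 2*(n:ℝ)^2 + (n:ℝ) := by
    rw [Matrix.mul_apply]
    have step : ∀ m : Fin (2*n+2), (A*A) 0 m * (A*A) m 1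
        = (if (m:ℕ) < 2 then ((n:ℝ)^2) else 0) + (if n + 2 ≤ (m:ℕ) then 1 else 0) := by
      intro m
      rw [hA2row m, hA2col m]
      have := m.isLt
      split_ifs <;> first | ring1 | (exfalso; omega)
    rw [Finset.sum_congr rfl (fun m _ => step m), Finset.sum_add_distrib]
    have e1 : ∑ m : Fin (2*n+2), (if (m:ℕ) < 2 then ((n:ℝ)^2) else 0) = 2*(n:ℝ)^2 := by
      rw [Fin.sum_univ_eq_sum_range (fun m => if m < 2 then ((n:ℝ)^2) else 0),
        ← Finset.sum_filter]
      have : (Finset.range (2*n+2)).filter (fun m => m < 2) = Finset.range 2 := by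
        ext a
        simp only [Finset.mem_filter, Finset.mem_range]
        omega
      rw [this, Finset.sum_const, Finset.card_range]
      push_cast
      ring
    have e2 : ∑ m : Fin (2*n+2), (if n + 2 ≤ (m:ℕ) then (1:ℝ) else 0) = n := by
      rw [Fin.sum_univ_eq_sum_range (fun m => if n + 2 ≤ m then (1:ℝ) else 0),
        Finset.sum_boole]
      have : (Finset.range (2*n+2)).filter (fun m => n + 2 ≤ m) = Finset.Ico (n+2) (2*n+2) := by
        ext a
        simp only [Finset.mem_filter, Finset.mem_range, Finset.mem_Ico]
        omega
      rw [this]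
      rw [Nat.card_Ico]
      congr 1
      omega
    rw [e1, e2]
  refine ⟨?_, ?_⟩
  swap
  · -- tendsto
    have h : Filter.Tendsto (fun m : ℕ => (2 * m + 1 : ℝ)) Filter.atTop Filter.atTop := by
      apply Filter.tendsto_atTop_add_const_right
      exact (tendsto_natCast_atTop_atTop (R := ℝ)).const_mul_atTop (by norm_num)
    have h2 : Filter.Tendsto (fun m : ℕ => 1 / (2 * m + 1 : ℝ)) Filter.atTop (nhds 0) := by
      exact h.inv_tendsto_atTop.congr fun m => by simp [one_div]
    have h3 := (tendsto_const_nhds (x := (1:ℝ)) (f := Filter.atTop)).sub h2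
    simp only [sub_zero] at h3
    refine h3.congr fun m => ?_
    have : (2 * m + 1 : ℝ) ≠ 0 := by positivity
    field_simp
    ring
  set s : ℝ := Real.sqrt (2 * n + 1) with hs
  have hs0 : (0:ℝ) ≤ 2 * n + 1 := by positivity
  have hs2 : s ^ 2 = 2 * n + 1 := Real.sq_sqrt hs0
  have hspos : 0 < s := Real.sqrt_pos.mpr (by positivity)
  set θ : Fin 5 → ℝ := ![s, -s, 1, -1, 0] with hθ
  have key : ∀ c d : Fin 5 → ℝ,
      (∑ r, c r • E r) * (∑ r, d r • E r) = ∑ r, (c r * d r) • E r := by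
    intro c d
    rw [Finset.sum_mul]
    refine Finset.sum_congr rfl fun r _ => ?_
    have : ∀ x : Fin 5, c r • (d x • (E r * E x))
        = if r = x then (c r * d r) • E r else 0 := by
      intro x
      rw [horth r x]
      by_cases h : r = x
      · subst h; rw [if_pos rfl, if_pos rfl, smul_smul]
      · rw [if_neg h, if_neg h, smul_zero, smul_zero]
    calc c r • E r * ∑ x, d x • E x = ∑ x, c r • (d x • (E r * E x)) := by
          rw [Finset.mul_sum]
          refine Finset.sum_congr rfl fun x _ => ?_
          rw [Matrix.smul_mul, Matrix.mul_smul]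
      _ = ∑ x, if r = x then (c r * d r) • E r else 0 :=
          Finset.sum_congr rfl fun x _ => this x
      _ = (c r * d r) • E r := by rw [Finset.sum_ite_eq]; simp
  have hdec' : A = ∑ r, θ r • E r := hdec
  have hA2 : A * A = ∑ r, (θ r * θ r) • E r := by rw [hdec']; exact key θ θ
  have hA3 : A * A * A = ∑ r, ((θ r * θ r) * θ r) • E r := by
    rw [hA2]
    rw [hdec']
    exact key _ _
  have hA4 : (A * A) * (A * A) = ∑ r, ((θ r * θ r) * (θ r * θ r)) • E r := by
    rw [hA2]; exact key _ _
  have entry : ∀ c : Fin 5 → ℝ, (∑ r, c r • E r) 0 1 = ∑ r, c r * E r 0 1 := by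
    intro c
    rw [Matrix.sum_apply]
    exact Finset.sum_congr rfl fun r _ => rfl
  set x : Fin 5 → ℝ := fun r => E r 0 1 with hx
  have hne01 : (0 : Fin (2*n+2)) ≠ 1 := by
    intro h
    have : ((0 : Fin (2*n+2)) : ℕ) = ((1 : Fin (2*n+2)) : ℕ) := by rw [h]
    simp [Fin.val_one'] at this
  have eq0 : x 0 + x 1 + x 2 + x 3 + x 4 = 0 := by
    have h := congrArg (fun M => M 0 1) hsum
    simp only [Matrix.sum_apply, Matrix.one_apply_ne hne01] at h
    rw [Fin.sum_univ_five] at h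
    exact h
  have eqθ : ∀ (c : Fin 5 → ℝ) (M : Matrix (Fin (2*n+2)) (Fin (2*n+2)) ℝ) (v : ℝ),
      M = ∑ r, c r • E r → M 0 1 = v →
      c 0 * x 0 + c 1 * x 1 + c 2 * x 2 + c 3 * x 3 + c 4 * x 4 = v := by
    intro c M v hM hv
    have h := congrArg (fun M => M 0 1) hM
    rw [entry c, Fin.sum_univ_five] at h
    rw [← h, hv]
  have eq1 := eqθ θ A 0 hdec' hA1e
  have eq2 := eqθ (fun r => θ r * θ r) (A*A) n hA2 hA2e
  have eq3 := eqθ (fun r => (θ r * θ r) * θ r) (A*A*A) 0 hA3 hA3e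
  have eq4 := eqθ (fun r => (θ r * θ r) * (θ r * θ r)) ((A*A)*(A*A)) (2*(n:ℝ)^2 + n) hA4 hA4e
  simp only [hθ, Matrix.cons_val_zero, Matrix.cons_val_one, Matrix.head_cons,
    Matrix.cons_val_two, Matrix.tail_cons, Matrix.cons_val_three,
    Matrix.cons_val_four, Matrix.head_fin_const] at eq1 eq2 eq3 eq4
  -- solve
  have hnR : (0:ℝ) < n := by exact_mod_cast hn
  have h01 : x 0 = x 1 := by
    have hfac : (s * (s^2 - 1)) * (x 0 - x 1) = 0 := by linear_combination eq3 - eq1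
    have hne : s * (s^2 - 1) ≠ 0 := by
      have : s^2 - 1 = 2*n := by rw [hs2]; ring
      rw [this]
      positivity
    have := mul_eq_zero.mp hfac
    rcases this with h | h
    · exact absurd h hne
    · linarith [h]
  have h23 : x 2 = x 3 := by linear_combination eq1 - s * h01
  have f2 : (2*(n:ℝ)+1) * (x 0 + x 1) + (x 2 + x 3) = n := by
    linear_combination eq2 - (x 0 + x 1) * hs2
  have f4 : (2*(n:ℝ)+1)^2 * (x 0 + x 1) + (x 2 + x 3) = 2*(n:ℝ)^2 + n := by
    linear_combination eq4 - ((s^2 + (2*(n:ℝ)+1)) * (x 0 + x 1)) * hs2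
  have hx0' : 2*(2*(n:ℝ)+1) * x 0 = n := by
    have h2n : (2*(n:ℝ)) ≠ 0 := by positivity
    apply mul_left_cancel₀ h2n
    linear_combination f4 - f2 + (2*(n:ℝ)*(2*(n:ℝ)+1)) * h01
  have hx2 : x 2 = 0 := by
    linear_combination (1/2) * f2 - (1/2) * hx0' + ((2*(n:ℝ)+1)/2) * h01 + (1/2) * h23
  have hx3 : x 3 = 0 := by rw [← h23]; exact hx2
  have hx4' : (2*(n:ℝ)+1) * x 4 = -n := by
    linear_combination (2*(n:ℝ)+1) * eq0 - hx0' + (2*(n:ℝ)+1)*h01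
      - (2*(n:ℝ)+1)*hx2 - (2*(n:ℝ)+1)*hx3
  have hd : (2*(n:ℝ)+1) ≠ 0 := by positivity
  have hx0 : x 0 = n / (2*(2*(n:ℝ)+1)) := by
    field_simp
    linarith [hx0']
  have hx1 : x 1 = n / (2*(2*(n:ℝ)+1)) := by rw [← h01]; exact hx0
  have hx4 : x 4 = -(n / (2*(n:ℝ)+1)) := by
    field_simp
    linarith [hx4']
  rw [Fin.sum_univ_five]
  show |x 0| + |x 1| + |x 2| + |x 3| + |x 4| = 2 * n / (2 * n + 1)
  rw [hx0, hx1, hx2, hx3, hx4, abs_neg, abs_zero]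
  rw [abs_of_nonneg (by positivity : (0:ℝ) ≤ (n:ℝ) / (2*(2*(n:ℝ)+1)))]
  rw [abs_of_nonneg (by positivity : (0:ℝ) ≤ (n:ℝ) / (2*(n:ℝ)+1))]
  field_simp
  ring
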